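/- A commutative semiring K is positive if and only if for every finite non-empty universe A, every model-defining K-interpretation π : Lit_A → K, and every first-order sentence φ over 𝒱: 𝔄_π ⊨ φ implies π⟦φ⟧ ≠ 0. -/

import Mathlib

/-- A finite relational vocabulary: a type of relation symbols with arities. -/
structure Vocab : Type 1 where
  Rel : Type
  arity : Rel → ℕ

/-- First-order formulas over a relational vocabulary `𝒱` (with equality),
with variables from `Vars`.  Negated atoms are included as primitive literals. -/
inductive Formula (𝒱 : Vocab) (Vars : Type) : Type where
  | rel    : (R : 𝒱.Rel) → (Fin (𝒱.arity R) → Vars) → Formula 𝒱 Vars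
  | nrel   : (R : 𝒱.Rel) → (Fin (𝒱.arity R) → Vars) → Formula 𝒱 Vars
  | equal  : Vars → Vars → Formula 𝒱 Vars
  | nequal : Vars → Vars → Formula 𝒱 Vars
  | and    : Formula 𝒱 Vars → Formula 𝒱 Vars → Formula 𝒱 Vars
  | or     : Formula 𝒱 Vars → Formula 𝒱 Vars → Formula 𝒱 Vars
  | all    : Vars → Formula 𝒱 Vars → Formula 𝒱 Vars
  | ex     : Vars → Formula 𝒱 Vars → Formula 𝒱 Vars
  | not    : Formula 𝒱 Vars → Formula 𝒱 Vars

/-- A ground literal over vocabulary `𝒱` and universe `A`: a positive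
(`pos = true`) or negated (`pos = false`) ground atom `R(ā)`. -/
structure Lit (𝒱 : Vocab) (A : Type) where
  pos : Bool
  R : 𝒱.Rel
  args : Fin (𝒱.arity R) → A

/-- Negation of a literal (the negation of a literal is again a literal). -/
def Lit.neg {𝒱 : Vocab} {A : Type} (L : Lit 𝒱 A) : Lit 𝒱 A := ⟨!L.pos, L.R, L.args⟩

namespace Formula

variable {𝒱 : Vocab} {Vars : Type}

/-- Size of a formula (used for termination of the semiring semantics). -/
def size : Formula 𝒱 Vars → ℕ
  | rel _ _ => 1
  | nrel _ _ => 1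
  | equal _ _ => 1
  | nequal _ _ => 1
  | and φ ψ => φ.size + ψ.size + 1
  | or φ ψ => φ.size + ψ.size + 1
  | all _ φ => φ.size + 1
  | ex _ φ => φ.size + 1
  | not φ => φ.size + 1

mutual
/-- Negation normal form of a formula. -/
def nnf : Formula 𝒱 Vars → Formula 𝒱 Vars
  | rel R v => rel R v
  | nrel R v => nrel R v
  | equal x y => equal x y
  | nequal x y => nequal x y
  | and φ ψ => and φ.nnf ψ.nnf
  | or φ ψ => or φ.nnf ψ.nnf
  | all x φ => all x φ.nnf
  | ex x φ => ex x φ.nnf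
  | not φ => nnfNeg φ

/-- Negation normal form of the negation of a formula: `nnfNeg φ = nnf (¬φ)`. -/
def nnfNeg : Formula 𝒱 Vars → Formula 𝒱 Vars
  | rel R v => nrel R v
  | nrel R v => rel R v
  | equal x y => nequal x y
  | nequal x y => equal x y
  | and φ ψ => or (nnfNeg φ) (nnfNeg ψ)
  | or φ ψ => and (nnfNeg φ) (nnfNeg ψ)
  | all x φ => ex x (nnfNeg φ)
  | ex x φ => all x (nnfNeg φ)
  | not φ => nnf φ
end

theorem size_nnf_le (φ : Formula 𝒱 Vars) : φ.nnf.size ≤ φ.size ∧ (nnfNeg φ).size ≤ φ.size := by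
  induction φ <;> simp_all [nnf, nnfNeg, size] <;> omega

/-- Free variables of a formula. -/
def FV [DecidableEq Vars] : Formula 𝒱 Vars → Finset Vars
  | rel _ v => Finset.image v Finset.univ
  | nrel _ v => Finset.image v Finset.univ
  | equal x y => {x, y}
  | nequal x y => {x, y}
  | and φ ψ => φ.FV ∪ ψ.FV
  | or φ ψ => φ.FV ∪ ψ.FV
  | all x φ => φ.FV.erase x
  | ex x φ => φ.FV.erase x
  | not φ => φ.FV

end Formula

section Semantics

variable {𝒱 : Vocab} {Vars A K : Type} [DecidableEq Vars] [Fintype A] [DecidableEq A]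
  [CommSemiring K]

/-- The extension of a `K`-interpretation `π : Lit 𝒱 A → K` to first-order formulas,
relative to a valuation `ν : Vars → A`:  `eval π φ ν = π⟦φ⟧ν`. -/
def eval (π : Lit 𝒱 A → K) : Formula 𝒱 Vars → (Vars → A) → K
  | .rel R v, ν => π ⟨true, R, fun i => ν (v i)⟩
  | .nrel R v, ν => π ⟨false, R, fun i => ν (v i)⟩
  | .equal x y, ν => if ν x = ν y then 1 else 0
  | .nequal x y, ν => if ν x ≠ ν y then 1 else 0
  | .and φ ψ, ν => eval π φ ν * eval π ψ ν
  | .or φ ψ, ν => eval π φ ν + eval π ψ ν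
  | .all x φ, ν => ∏ a : A, eval π φ (Function.update ν x a)
  | .ex x φ, ν => ∑ a : A, eval π φ (Function.update ν x a)
  | .not φ, ν => eval π (Formula.nnfNeg φ) ν
termination_by φ _ => φ.size
decreasing_by
  all_goals simp [Formula.size]
  all_goals first
    | omega
    | exact Nat.lt_succ_of_le (Formula.size_nnf_le _).2
    | exact (Formula.size_nnf_le _).2

end Semantics

/-- A `𝒱`-structure with universe `A`: an interpretation of each relation symbol. -/
def Struc (𝒱 : Vocab) (A : Type) := (R : 𝒱.Rel) → (Fin (𝒱.arity R) → A) → Prop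

/-- Standard (Tarski) satisfaction of a literal in a structure. -/
def Struc.SatLit {𝒱 : Vocab} {A : Type} (𝔄 : Struc 𝒱 A) (L : Lit 𝒱 A) : Prop :=
  if L.pos then 𝔄 L.R L.args else ¬ 𝔄 L.R L.args

section Sat

variable {𝒱 : Vocab} {Vars A : Type} [DecidableEq Vars]

/-- Standard (Tarski) satisfaction relation `𝔄 ⊨ φ[ν]`. -/
def Sat (𝔄 : Struc 𝒱 A) : Formula 𝒱 Vars → (Vars → A) → Prop
  | .rel R v, ν => 𝔄 R (fun i => ν (v i))
  | .nrel R v, ν => ¬ 𝔄 R (fun i => ν (v i))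
  | .equal x y, ν => ν x = ν y
  | .nequal x y, ν => ν x ≠ ν y
  | .and φ ψ, ν => Sat 𝔄 φ ν ∧ Sat 𝔄 ψ ν
  | .or φ ψ, ν => Sat 𝔄 φ ν ∨ Sat 𝔄 ψ ν
  | .all x φ, ν => ∀ a : A, Sat 𝔄 φ (Function.update ν x a)
  | .ex x φ, ν => ∃ a : A, Sat 𝔄 φ (Function.update ν x a)
  | .not φ, ν => ¬ Sat 𝔄 φ ν

end Sat

section ModelDefining

variable {𝒱 : Vocab} {A K : Type} [CommSemiring K]

/-- A `K`-interpretation is model-defining if for each fact exactly one of the values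
assigned to it and to its negation is `0`. -/
def ModelDefining (π : Lit 𝒱 A → K) : Prop :=
  ∀ L : Lit 𝒱 A, (π L = 0 ∧ π L.neg ≠ 0) ∨ (π L ≠ 0 ∧ π L.neg = 0)

/-- The structure `𝔄_π` defined by a model-defining interpretation `π`:
it satisfies a literal `L` iff `π L ≠ 0`. -/
def StrucOf (π : Lit 𝒱 A → K) : Struc 𝒱 A := fun R a => π ⟨true, R, a⟩ ≠ 0

end ModelDefining

/-- A commutative semiring is positive if it is `+`-positive and has no divisors of zero. -/
def IsPositive (K : Type) [CommSemiring K] : Prop :=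
  (∀ a b : K, a + b = 0 → a = 0 ∧ b = 0) ∧ ∀ a b : K, a * b = 0 → a = 0 ∨ b = 0


section Aux

variable {𝒱 : Vocab} {Vars A K : Type} [DecidableEq Vars]

theorem sat_nnf_nnfNeg (𝔄 : Struc 𝒱 A) (φ : Formula 𝒱 Vars) :
    ∀ ν, (Sat 𝔄 φ.nnf ν ↔ Sat 𝔄 φ ν) ∧ (Sat 𝔄 (Formula.nnfNeg φ) ν ↔ ¬ Sat 𝔄 φ ν) := by
  induction φ with
  | rel R v => intro ν; simp [Formula.nnf, Formula.nnfNeg, Sat]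
  | nrel R v => intro ν; simp [Formula.nnf, Formula.nnfNeg, Sat]
  | equal x y => intro ν; simp [Formula.nnf, Formula.nnfNeg, Sat]
  | nequal x y => intro ν; simp [Formula.nnf, Formula.nnfNeg, Sat]
  | and φ ψ ihφ ihψ =>
      intro ν
      simp only [Formula.nnf, Formula.nnfNeg, Sat, (ihφ ν).1, (ihφ ν).2, (ihψ ν).1, (ihψ ν).2]
      tauto
  | or φ ψ ihφ ihψ =>
      intro ν
      simp only [Formula.nnf, Formula.nnfNeg, Sat, (ihφ ν).1, (ihφ ν).2, (ihψ ν).1, (ihψ ν).2]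
      tauto
  | all x φ ih =>
      intro ν
      simp only [Formula.nnf, Formula.nnfNeg, Sat]
      constructor
      · exact ⟨fun h a => ((ih _).1).mp (h a), fun h a => ((ih _).1).mpr (h a)⟩
      · simp only [(fun a => (ih (Function.update ν x a)).2 : ∀ a, _)]
        push_neg
        tauto
  | ex x φ ih =>
      intro ν
      simp only [Formula.nnf, Formula.nnfNeg, Sat]
      constructor
      · exact ⟨fun ⟨a, h⟩ => ⟨a, ((ih _).1).mp h⟩, fun ⟨a, h⟩ => ⟨a, ((ih _).1).mpr h⟩⟩
      · simp only [(fun a => (ih (Function.update ν x a)).2 : ∀ a, _)]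
        push_neg
        tauto
  | not φ ih =>
      intro ν
      simp only [Formula.nnf, Formula.nnfNeg, Sat, (ih ν).1, (ih ν).2]
      tauto

theorem sum_pos_eq_zero [CommSemiring K] (hadd : ∀ a b : K, a + b = 0 → a = 0 ∧ b = 0)
    {ι : Type} (s : Finset ι) (f : ι → K) (h : ∑ i ∈ s, f i = 0) : ∀ i ∈ s, f i = 0 := by
  classical
  induction s using Finset.induction with
  | empty => simp
  | insert a s hx ih =>
      rw [Finset.sum_insert hx] at h
      obtain ⟨h1, h2⟩ := hadd _ _ h
      intro i hi
      rcases Finset.mem_insert.mp hi with rfl | hi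
      · exact h1
      · exact ih h2 i hi

theorem prod_pos_ne_zero [CommSemiring K] (hmul : ∀ a b : K, a * b = 0 → a = 0 ∨ b = 0)
    (h1 : (1 : K) ≠ 0) {ι : Type} (s : Finset ι) (f : ι → K) (h : ∀ i ∈ s, f i ≠ 0) :
    ∏ i ∈ s, f i ≠ 0 := by
  classical
  induction s using Finset.induction with
  | empty => simpa using h1
  | insert a s hx ih =>
      rw [Finset.prod_insert hx]
      intro h0
      rcases hmul _ _ h0 with h0 | h0
      · exact h _ (Finset.mem_insert_self _ _) h0
      · exact ih (fun i hi => h i (Finset.mem_insert_of_mem hi)) h0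

theorem eval_ne_zero_of_sat [Fintype A] [DecidableEq A] [CommSemiring K]
    (hpos : IsPositive K) (h1 : (1 : K) ≠ 0) (π : Lit 𝒱 A → K) (hπ : ModelDefining π) :
    ∀ n (φ : Formula 𝒱 Vars), φ.size ≤ n → ∀ ν, Sat (StrucOf π) φ ν → eval π φ ν ≠ 0 := by
  intro n
  induction n with
  | zero => intro φ h; cases φ <;> simp [Formula.size] at h
  | succ n ih =>
      intro φ hs ν hsat
      cases φ with
      | rel R v =>
          simp only [Sat, StrucOf] at hsat
          simpa [eval] using hsat
      | nrel R v =>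
          simp only [Sat, StrucOf, not_not] at hsat
          rcases hπ ⟨true, R, fun i => ν (v i)⟩ with ⟨_, hne⟩ | ⟨hne, _⟩
          · simpa [eval, Lit.neg] using hne
          · exact absurd hsat hne
      | equal x y =>
          simp only [Sat] at hsat
          simpa [eval, hsat] using h1
      | nequal x y =>
          simp only [Sat] at hsat
          simpa [eval, hsat] using h1
      | and φ ψ =>
          simp only [Formula.size] at hs
          obtain ⟨h₁, h₂⟩ := hsat
          simp only [eval]
          intro h0
          rcases hpos.2 _ _ h0 with h0 | h0
          · exact ih φ (by omega) ν h₁ h0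
          · exact ih ψ (by omega) ν h₂ h0
      | or φ ψ =>
          simp only [Formula.size] at hs
          simp only [eval]
          intro h0
          obtain ⟨h0₁, h0₂⟩ := hpos.1 _ _ h0
          rcases hsat with h | h
          · exact ih φ (by omega) ν h h0₁
          · exact ih ψ (by omega) ν h h0₂
      | all x φ =>
          simp only [Formula.size] at hs
          simp only [eval]
          exact prod_pos_ne_zero hpos.2 h1 _ _
            (fun a _ => ih φ (by omega) _ (hsat a))
      | ex x φ =>
          simp only [Formula.size] at hs
          simp only [eval]
          obtain ⟨a, ha⟩ := hsat
          intro h0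
          exact ih φ (by omega) _ ha
            (sum_pos_eq_zero hpos.1 _ _ h0 a (Finset.mem_univ a))
      | not φ =>
          simp only [Formula.size] at hs
          simp only [eval]
          have hsat' : Sat (StrucOf π) (Formula.nnfNeg φ) ν :=
            (sat_nnf_nnfNeg (StrucOf π) φ ν).2.mpr hsat
          exact ih (Formula.nnfNeg φ) (le_trans (Formula.size_nnf_le φ).2 (by omega)) ν hsat'

end Aux

/-- a commutative semiring `K` is positive if and only if for every
finite non-empty universe `A`, every model-defining `K`-interpretation `π` and every
sentence `φ`, `𝔄_π ⊨ φ` implies `π⟦φ⟧ ≠ 0`.  (For the right-to-left direction the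
vocabulary is required to contain a relation symbol of positive arity.) -/
theorem isPositive_iff_modelDefining_sound {K : Type} [CommSemiring K]
    (𝒱 : Vocab) (hV : ∃ R : 𝒱.Rel, 0 < 𝒱.arity R) :
    IsPositive K ↔
      ∀ (A : Type) [Fintype A] [DecidableEq A] [Nonempty A] (π : Lit 𝒱 A → K),
        ModelDefining π →
        ∀ (Vars : Type) [DecidableEq Vars] (φ : Formula 𝒱 Vars), φ.FV = ∅ →
          ∀ ν : Vars → A, Sat (StrucOf π) φ ν → eval π φ ν ≠ 0 := by
  obtain ⟨R₀, hR₀⟩ := hV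
  constructor
  · intro hpos A _ _ _ π hπ Vars _ φ _ ν hsat
    -- get a nonzero element of K, hence 1 ≠ 0
    have hne : ∃ c : K, c ≠ 0 := by
      have a0 : A := Classical.arbitrary A
      rcases hπ ⟨true, R₀, fun _ => a0⟩ with ⟨_, h⟩ | ⟨h, _⟩
      · exact ⟨_, h⟩
      · exact ⟨_, h⟩
    obtain ⟨c, hc⟩ := hne
    have h1 : (1 : K) ≠ 0 := fun h => hc (by rw [← mul_one c, h, mul_zero])
    exact eval_ne_zero_of_sat hpos h1 π hπ φ.size φ le_rfl ν hsat
  · intro H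
    -- the key construction: for nonzero a b, a model-defining interpretation with
    -- values a and b on the two points of `Bool`
    have key : ∀ a b : K, a ≠ 0 → b ≠ 0 →
        a * b ≠ 0 ∧ a + b ≠ 0 := by
      intro a b ha hb
      have h1 : (1 : K) ≠ 0 := fun h => ha (by rw [← mul_one a, h, mul_zero])
      set π : Lit 𝒱 Bool → K := fun L =>
        if L.pos then
          (if h : 0 < 𝒱.arity L.R then (if L.args ⟨0, h⟩ then a else b) else 1)
        else 0 with hπdef
      have hπval : ∀ L : Lit 𝒱 Bool, L.pos = true → π L ≠ 0 := by
        intro L hL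
        simp only [hπdef, hL, if_true]
        split
        · split
          · exact ha
          · exact hb
        · exact h1
      have hπ : ModelDefining π := by
        intro L
        cases hL : L.pos
        · left
          refine ⟨by simp [hπdef, hL], hπval L.neg (by simp [Lit.neg, hL])⟩
        · right
          refine ⟨hπval L hL, by simp [hπdef, Lit.neg, hL]⟩
      have hval : ∀ v : Bool, π ⟨true, R₀, fun _ => v⟩ = if v then a else b := by
        intro v
        simp [hπdef, hR₀]
      -- the inner atomic formula
      have hsat_atom : ∀ (ν : Unit → Bool), Sat (StrucOf π) (Formula.rel R₀ (fun _ => ())) ν := by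
        intro ν
        simp only [Sat, StrucOf]
        exact hπval _ rfl
      have heval_atom : ∀ (ν : Unit → Bool),
          eval π (Formula.rel R₀ (fun _ => ())) ν = if ν () then a else b := by
        intro ν
        simp only [eval]
        exact hval (ν ())
      have hFV : ∀ φ : Formula 𝒱 Unit, (Formula.ex () φ).FV = ∅ ∧ (Formula.all () φ).FV = ∅ := by
        intro φ
        constructor <;>
        · simp only [Formula.FV]
          ext x
          simp
      constructor
      · -- multiplicative: use ∀x R(x,…,x)
        have := H Bool π hπ Unit (Formula.all () (Formula.rel R₀ (fun _ => ())))
          (hFV _).2 (fun _ => true)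
          (by intro v; exact hsat_atom _)
        rw [show eval π (Formula.all () (Formula.rel R₀ (fun _ => ()))) (fun _ => true)
            = ∏ v : Bool, eval π (Formula.rel R₀ (fun _ => ()))
                (Function.update (fun _ => true) () v) from by simp only [eval]] at this
        simp only [heval_atom, Function.update_self] at this
        rwa [Fintype.prod_bool, if_pos rfl, if_neg (by simp)] at this
      · -- additive: use ∃x R(x,…,x)
        have := H Bool π hπ Unit (Formula.ex () (Formula.rel R₀ (fun _ => ())))
          (hFV _).1 (fun _ => true) ⟨true, hsat_atom _⟩
        rw [show eval π (Formula.ex () (Formula.rel R₀ (fun _ => ()))) (fun _ => true)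
            = ∑ v : Bool, eval π (Formula.rel R₀ (fun _ => ()))
                (Function.update (fun _ => true) () v) from by simp only [eval]] at this
        simp only [heval_atom, Function.update_self] at this
        rwa [Fintype.sum_bool, if_pos rfl, if_neg (by simp)] at this
    constructor
    · intro a b hab
      have ha : a = 0 := by
        by_contra ha
        have hb : b ≠ 0 := by
          intro hb
          exact ha (by rwa [hb, add_zero] at hab)
        exact (key a b ha hb).2 hab
      exact ⟨ha, by rwa [ha, zero_add] at hab⟩
    · intro a b hab
      by_contra h
      push_neg at h
      exact (key a b h.1 h.2).1 hab
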